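/- Let f_1 : ℝ → [0,+∞] be proper convex lsc with f_1(0)=0, and suppose m_0 lies in the interior of the domain D(∂f_1), with 0 in the interior of D(∂f_1) as well. Then there exist constants δ_0 > 0 and C_0 ≥ 0, independent of ε, such that for all ε ∈ (0,1) and all r ∈ ℝ, f_{1,ε}'(r)(r - m_0) ≥ δ_0 |f_{1,ε}'(r)| - C_0, where f_{1,ε}' is the Yosida approximation of ∂f_1. -/

import Mathlib

/-- The subdifferential of an extended-real-valued function on `ℝ`. -/
def subdiff (f : ℝ → EReal) (r : ℝ) : Set ℝ :=
  {y | ∀ s : ℝ, f r + ((y * (s - r) : ℝ) : EReal) ≤ f s}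

lemma subdiff_ne_top (f₁ : ℝ → EReal) (hnonneg : ∀ r, 0 ≤ f₁ r) (hzero : f₁ 0 = 0)
    {s : ℝ} (hs : (subdiff f₁ s).Nonempty) : f₁ s ≠ ⊤ := by
  obtain ⟨y, hy⟩ := hs
  intro htop
  have h := hy 0
  rw [hzero, htop] at h
  have : (⊤ : EReal) + ((y * (0 - s) : ℝ) : EReal) = ⊤ :=
    EReal.top_add_of_ne_bot (EReal.coe_ne_bot _)
  rw [this] at h
  exact absurd h (by simp)

lemma key_ineq (f₁ : ℝ → EReal) (hnonneg : ∀ r, 0 ≤ f₁ r) (hzero : f₁ 0 = 0)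
    {u y s : ℝ} (hy : y ∈ subdiff f₁ u) (hs : (subdiff f₁ s).Nonempty) :
    y * (s - u) ≤ (f₁ s).toReal := by
  have hbot : f₁ s ≠ ⊥ := (lt_of_lt_of_le EReal.bot_lt_zero (hnonneg s)).ne'
  have htop : f₁ s ≠ ⊤ := subdiff_ne_top f₁ hnonneg hzero hs
  have hco : f₁ s = (((f₁ s).toReal : ℝ) : EReal) := (EReal.coe_toReal htop hbot).symm
  have h1 : ((y * (s - u) : ℝ) : EReal) ≤ f₁ s := by
    calc ((y * (s - u) : ℝ) : EReal) = 0 + ((y * (s - u) : ℝ) : EReal) := by simp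
    _ ≤ f₁ u + ((y * (s - u) : ℝ) : EReal) := add_le_add_left (hnonneg u) _
    _ ≤ f₁ s := hy s
  rw [hco] at h1
  exact_mod_cast h1

/-- If `0` and `m₀` lie in the interior of the domain `D(∂f₁)`, then there exist
`δ₀ > 0` and `C₀ ≥ 0`, independent of `ε ∈ (0,1)`, such that the Yosida approximation
`f₁ε'(r) = (r - J r)/ε` satisfies `f₁ε'(r)(r - m₀) ≥ δ₀|f₁ε'(r)| - C₀` for all `r`. -/
theorem yosida_coercivity_estimate
    (f₁ : ℝ → EReal)
    (hnonneg : ∀ r, 0 ≤ f₁ r)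
    (hzero : f₁ 0 = 0)
    (hlsc : LowerSemicontinuous f₁)
    (hconv : ∀ a b t : ℝ, 0 ≤ t → t ≤ 1 →
      f₁ (t * a + (1 - t) * b) ≤ (t : EReal) * f₁ a + ((1 - t : ℝ) : EReal) * f₁ b)
    (m₀ : ℝ)
    (hm₀ : m₀ ∈ interior {r : ℝ | (subdiff f₁ r).Nonempty})
    (h0 : (0 : ℝ) ∈ interior {r : ℝ | (subdiff f₁ r).Nonempty}) :
    ∃ δ₀ C₀ : ℝ, 0 < δ₀ ∧ 0 ≤ C₀ ∧
      ∀ ε ∈ Set.Ioo (0 : ℝ) 1, ∀ J : ℝ → ℝ,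
        (∀ r : ℝ, (r - J r) / ε ∈ subdiff f₁ (J r)) →
        ∀ r : ℝ, (r - J r) / ε * (r - m₀) ≥ δ₀ * |(r - J r) / ε| - C₀ := by
  obtain ⟨δ, hδ, hball⟩ := Metric.isOpen_iff.1 isOpen_interior m₀ hm₀
  set δ' : ℝ := δ / 2 with hδ'def
  have hδ' : 0 < δ' := by positivity
  have hp : (subdiff f₁ (m₀ + δ')).Nonempty := by
    have : m₀ + δ' ∈ Metric.ball m₀ δ := by
      simp only [Metric.mem_ball, Real.dist_eq]
      rw [show m₀ + δ' - m₀ = δ' by ring, abs_of_pos hδ']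
      linarith
    have h' : m₀ ∈ Metric.ball m₀ δ ∨ True := Or.inr trivial
    have hm : _ ∈ {r : ℝ | (subdiff f₁ r).Nonempty} := interior_subset (hball this)
    exact hm
  have hq : (subdiff f₁ (m₀ - δ')).Nonempty := by
    have : m₀ - δ' ∈ Metric.ball m₀ δ := by
      simp only [Metric.mem_ball, Real.dist_eq]
      rw [show m₀ - δ' - m₀ = -δ' by ring, abs_neg, abs_of_pos hδ']
      linarith
    have h' : m₀ ∈ Metric.ball m₀ δ ∨ True := Or.inr trivial
    have hm : _ ∈ {r : ℝ | (subdiff f₁ r).Nonempty} := interior_subset (hball this)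
    exact hm
  set A : ℝ := (f₁ (m₀ + δ')).toReal
  set B : ℝ := (f₁ (m₀ - δ')).toReal
  have hA : 0 ≤ A := by
    simpa using EReal.toReal_le_toReal (hnonneg (m₀ + δ'))
      (by simp) (subdiff_ne_top f₁ hnonneg hzero hp)
  have hB : 0 ≤ B := by
    simpa using EReal.toReal_le_toReal (hnonneg (m₀ - δ'))
      (by simp) (subdiff_ne_top f₁ hnonneg hzero hq)
  refine ⟨δ', max A B, hδ', le_max_of_le_left hA, ?_⟩
  rintro ε ⟨hε0, hε1⟩ J hJ r
  set u : ℝ := J r with hu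
  set y : ℝ := (r - u) / ε with hydef
  have hy : y ∈ subdiff f₁ u := hJ r
  have hru : r - u = ε * y := by
    rw [hydef]; field_simp
  rcases le_or_gt 0 y with hy0 | hy0
  · -- y ≥ 0 : use s = m₀ + δ'
    have h1 : y * (m₀ + δ' - u) ≤ A := key_ineq f₁ hnonneg hzero hy hp
    rw [abs_of_nonneg hy0]
    have hAC : A ≤ max A B := le_max_left A B
    have hsq : 0 ≤ ε * y ^ 2 := mul_nonneg hε0.le (sq_nonneg y)
    have hr : r - m₀ = (u - m₀) + ε * y := by linarith
    rw [ge_iff_le, hr]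
    nlinarith [h1, hAC, hsq]
  · -- y < 0 : use s = m₀ - δ'
    have h1 : y * (m₀ - δ' - u) ≤ B := key_ineq f₁ hnonneg hzero hy hq
    rw [abs_of_neg hy0]
    have hBC : B ≤ max A B := le_max_right A B
    have hsq : 0 ≤ ε * y ^ 2 := mul_nonneg hε0.le (sq_nonneg y)
    have hr : r - m₀ = (u - m₀) + ε * y := by linarith
    rw [ge_iff_le, hr]
    nlinarith [h1, hBC, hsq]
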